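/- Let S = ⟨a, sa+d, sa+2d, ..., sa+nd⟩ be a numerical semigroup generated by a generalized arithmetic sequence with gcd(a,d) = 1. Then S is nearly Gorenstein if and only if s = 1 or a ≡ 2 (mod n). -/
import Mathlib


/-- A numerical semigroup: a subset of ℕ containing 0, closed under addition,
with finite complement. -/
def IsNumSgp (S : Set ℕ) : Prop :=
  0 ∈ S ∧ (∀ a ∈ S, ∀ b ∈ S, a + b ∈ S) ∧ (Sᶜ : Set ℕ).Finite

/-- An integer belongs to (the image in ℤ of) S. -/
def memZ (S : Set ℕ) (z : ℤ) : Prop := ∃ s ∈ S, (s : ℤ) = z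

/-- F is the Frobenius number of S: the largest natural number not in S. -/
def IsFrob (S : Set ℕ) (F : ℕ) : Prop := F ∉ S ∧ ∀ n, F < n → n ∈ S

/-- The set of pseudo-Frobenius numbers of S. -/
def PF (S : Set ℕ) : Set ℕ := {f | f ∉ S ∧ ∀ s ∈ S, s ≠ 0 → f + s ∈ S}

/-- n is a minimal generator of S. -/
def IsMinGen (S : Set ℕ) (n : ℕ) : Prop :=
  n ∈ S ∧ n ≠ 0 ∧ ¬∃ a ∈ S, ∃ b ∈ S, a ≠ 0 ∧ b ≠ 0 ∧ a + b = n

/-- S is almost symmetric (Nari): F - f ∈ PF(S) for every f ∈ PF(S). -/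
def AlmostSym (S : Set ℕ) (F : ℕ) : Prop :=
  ∀ f ∈ PF S, ∃ g ∈ PF S, (g : ℤ) = (F : ℤ) - (f : ℤ)

/-- S is symmetric: PF(S) = {F(S)} (vacuously true when S = ℕ). -/
def IsSym (S : Set ℕ) : Prop := ∀ F, IsFrob S F → PF S = {F}

/-- (f_1,...,f_ν) is an NG-vector for S with minimal generators n_1,...,n_ν. -/
def IsNGVector {ν : ℕ} (S : Set ℕ) (n f : Fin ν → ℕ) : Prop :=
  ∀ i, f i ∈ PF S ∧ ∀ g ∈ PF S, memZ S ((n i : ℤ) + (f i : ℤ) - (g : ℤ))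

/-- S is nearly Gorenstein (generator criterion): for each minimal generator m
there is f ∈ PF(S) with m + f - g ∈ S for all g ∈ PF(S). -/
def NearlyGGen (S : Set ℕ) : Prop :=
  ∀ m, IsMinGen S m → ∃ f ∈ PF S, ∀ g ∈ PF S, memZ S ((m : ℤ) + (f : ℤ) - (g : ℤ))

/-- The canonical ideal K(S) = {z ∈ ℤ : F - z ∉ S}. -/
def Kan (S : Set ℕ) (F : ℕ) : Set ℤ := {z | ¬ memZ S ((F : ℤ) - z)}

/-- The relative ideal (S - K(S)) = {z ∈ ℤ : z + K(S) ⊆ S}. -/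
def SmK (S : Set ℕ) (F : ℕ) : Set ℤ := {z | ∀ k ∈ Kan S F, memZ S (z + k)}

/-- S is nearly Gorenstein: M(S) ⊆ K(S) + (S - K(S)). -/
def NearlyG (S : Set ℕ) (F : ℕ) : Prop :=
  ∀ m ∈ S, m ≠ 0 → ∃ k ∈ Kan S F, ∃ x ∈ SmK S F, k + x = (m : ℤ)

namespace S15


/-- ceiling division ⌈t/n⌉ -/
def ct (n t : ℕ) : ℕ := (t + n - 1) / n

variable {n t t' Q : ℕ}

lemma ct_zero (hn : 0 < n) : ct n 0 = 0 := by
  unfold ct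
  rw [Nat.div_eq_of_lt] <;> omega

lemma ct_mono (h : t ≤ t') : ct n t ≤ ct n t' :=
  Nat.div_le_div_right (by omega)

lemma ct_le_of_le_mul (hn : 0 < n) (h : t ≤ n * Q) : ct n t ≤ Q := by
  unfold ct
  rw [Nat.div_le_iff_le_mul_add_pred hn]
  omega

lemma le_mul_ct (hn : 0 < n) : t ≤ n * ct n t := by
  rcases Nat.eq_zero_or_pos t with h | h
  · simp [h]
  have h1 := Nat.div_add_mod (t + n - 1) n
  have h2 : (t + n - 1) % n < n := Nat.mod_lt _ hn
  unfold ct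
  generalize hE : n * ((t + n - 1) / n) = E at *
  omega

lemma mul_ct_le : n * ct n t ≤ t + n - 1 := by
  rw [mul_comm]; exact Nat.div_mul_le_self _ _

lemma lt_ct (hn : 0 < n) (h : n * Q < t) : Q < ct n t := by
  have : Q + 1 ≤ ct n t := by
    unfold ct
    rw [Nat.le_div_iff_mul_le hn, add_mul, one_mul, mul_comm]
    omega
  omega

lemma ct_mul (hn : 0 < n) : ct n (n * Q) = Q := by
  rcases Nat.eq_zero_or_pos Q with h | h
  · simp [h, ct_zero hn]
  have h1 : ct n (n * Q) ≤ Q := ct_le_of_le_mul hn le_rfl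
  have h2 : Q - 1 < ct n (n * Q) := lt_ct hn (by
    have h3 : n * (Q-1) + n = n * Q := by
      rw [← Nat.mul_succ]; congr 1; omega
    omega)
  omega

lemma ct_eq_one (hn : 0 < n) (h1 : 1 ≤ t) (h2 : t ≤ n) : ct n t = 1 := by
  have ha := ct_le_of_le_mul hn (show t ≤ n * 1 by omega)
  have hb := lt_ct hn (show n * 0 < t by omega)
  omega

lemma ct_add_n (hn : 0 < n) : ct n (t + n) = ct n t + 1 := by
  unfold ct
  have : t + n + n - 1 = (t + n - 1) + n := by omega
  rw [this, Nat.add_div_right _ hn]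





def gg (a s d n : ℕ) : Fin (n+1) → ℕ :=
  fun j => if (j : ℕ) = 0 then a else s * a + (j : ℕ) * d

def w (a s d n t : ℕ) : ℕ := s * ct n t * a + t * d

variable {a s d n : ℕ} {S : Set ℕ}

lemma gg_pos (ha : 0 < a) (hs : 0 < s) (j : Fin (n+1)) : 0 < gg a s d n j := by
  unfold gg
  split
  · exact ha
  · have : 0 < s * a := by positivity
    omega

section basic
variable (hgen : S = {m : ℕ | ∃ c : Fin (n + 1) → ℕ, m = ∑ j, c j * gg a s d n j})
include hgen

lemma zero_mem : 0 ∈ S := by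
  rw [hgen]
  exact ⟨fun _ => 0, by simp⟩

lemma gen_mem (j : Fin (n+1)) : gg a s d n j ∈ S := by
  rw [hgen]
  refine ⟨fun i => if i = j then 1 else 0, ?_⟩
  simp [ite_mul, Finset.sum_ite_eq']

lemma add_mem {x y : ℕ} (hx : x ∈ S) (hy : y ∈ S) : x + y ∈ S := by
  rw [hgen] at hx hy ⊢
  obtain ⟨c1, h1⟩ := hx
  obtain ⟨c2, h2⟩ := hy
  exact ⟨c1 + c2, by simp [h1, h2, add_mul, Finset.sum_add_distrib]⟩

lemma decomp (ha : 0 < a) (hs : 0 < s) {x : ℕ} (hx : x ∈ S) (hx0 : x ≠ 0) :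
    ∃ j : Fin (n+1), ∃ y ∈ S, x = gg a s d n j + y := by
  rw [hgen] at hx
  obtain ⟨c, hc⟩ := hx
  have hex : ∃ j, c j ≠ 0 := by
    by_contra hall
    push_neg at hall
    exact hx0 (by simp [hc, hall])
  obtain ⟨j, hj⟩ := hex
  refine ⟨j, ∑ i, (Function.update c j (c j - 1)) i * gg a s d n i, by rw [hgen]; exact ⟨_, rfl⟩, ?_⟩
  have hsplit : ∀ c' : Fin (n+1) → ℕ, ∑ i, c' i * gg a s d n i
      = c' j * gg a s d n j + ∑ i ∈ Finset.univ.erase j, c' i * gg a s d n i := by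
    intro c'
    exact (Finset.add_sum_erase _ _ (Finset.mem_univ j)).symm
  have heq : ∑ i ∈ Finset.univ.erase j, (Function.update c j (c j - 1)) i * gg a s d n i
      = ∑ i ∈ Finset.univ.erase j, c i * gg a s d n i := by
    apply Finset.sum_congr rfl
    intro i hi
    rw [Function.update_of_ne (Finset.ne_of_mem_erase hi)]
  rw [hc, hsplit c, hsplit (Function.update c j (c j - 1)), heq, Function.update_self]
  have hgpos := gg_pos (s := s) (d := d) (n := n) ha hs j
  have : c j * gg a s d n j = gg a s d n j + (c j - 1) * gg a s d n j := by
    rw [Nat.sub_one_mul]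
    have : gg a s d n j ≤ c j * gg a s d n j := Nat.le_mul_of_pos_left _ (by omega)
    omega
  omega

end basic


variable {a s d n t t' Q : ℕ} {S : Set ℕ}

lemma gg_zero : gg a s d n 0 = a := by simp [gg]

lemma gg_of_ne {j : Fin (n+1)} (hj : (j : ℕ) ≠ 0) : gg a s d n j = s * a + (j : ℕ) * d := by
  simp [gg, hj]

lemma w_zero (hn : 0 < n) : w a s d n 0 = 0 := by simp [w, ct_zero hn]

lemma w_eval : w a s d n t = s * ct n t * a + t * d := rfl

lemma w_mono (h : t ≤ t') : w a s d n t ≤ w a s d n t' := by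
  unfold w
  have := ct_mono (n := n) h
  have h1 : s * ct n t * a ≤ s * ct n t' * a := by
    apply Nat.mul_le_mul_right
    exact Nat.mul_le_mul_left _ this
  have h2 : t * d ≤ t' * d := Nat.mul_le_mul_right _ h
  omega

section withgen
variable (hgen : S = {m : ℕ | ∃ c : Fin (n + 1) → ℕ, m = ∑ j, c j * gg a s d n j})
include hgen

lemma w_mem (hn : 0 < n) : ∀ t, w a s d n t ∈ S := by
  intro t
  induction t using Nat.strong_induction_on with
  | _ t ih =>
    rcases Nat.lt_or_ge t 1 with h | h
    · interval_cases t
      rw [w_zero hn]; exact zero_mem hgen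
    rcases le_or_gt t n with h2 | h2
    · have : w a s d n t = gg a s d n ⟨t, by omega⟩ := by
        rw [gg_of_ne (by simpa using (by omega : t ≠ 0))]
        simp [w, ct_eq_one hn h h2]
      rw [this]; exact gen_mem hgen _
    · have hw0 : ∀ u, w a s d n (u + n) = w a s d n u + gg a s d n ⟨n, by omega⟩ := by
        intro u
        rw [gg_of_ne (by simpa using (by omega : n ≠ 0))]
        unfold w
        rw [ct_add_n hn]
        ring
      have hw : w a s d n t = w a s d n (t - n) + gg a s d n ⟨n, by omega⟩ := by
        conv_lhs => rw [(by omega : t = (t - n) + n)]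
        rw [hw0]
      rw [hw]
      exact add_mem hgen (ih _ (by omega)) (gen_mem hgen _)

lemma kaw_mem (hn : 0 < n) (k t : ℕ) : k * a + w a s d n t ∈ S := by
  induction k with
  | zero => simpa using w_mem hgen hn t
  | succ k ih =>
    have : (k+1) * a + w a s d n t = a + (k * a + w a s d n t) := by ring
    rw [this]
    exact add_mem hgen (by simpa [gg_zero] using gen_mem hgen (0 : Fin (n+1))) ih

lemma mem_iff (hn : 0 < n) {x : ℕ} :
    x ∈ S ↔ ∃ t k, x = k * a + w a s d n t := by
  constructor
  · intro hx
    rw [hgen] at hx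
    obtain ⟨c, hc⟩ := hx
    rw [Fin.sum_univ_succ] at hc
    set T := ∑ i : Fin n, c i.succ with hT
    set t := ∑ i : Fin n, ((i : ℕ) + 1) * c i.succ with ht
    have hsum : ∑ i : Fin n, c i.succ * gg a s d n i.succ = T * (s * a) + t * d := by
      rw [hT, ht, Finset.sum_mul, Finset.sum_mul]
      rw [← Finset.sum_add_distrib]
      apply Finset.sum_congr rfl
      intro i _
      rw [gg_of_ne (by simp)]
      simp [Fin.val_succ]
      ring
    have htT : t ≤ n * T := by
      rw [ht, hT, Finset.mul_sum]
      apply Finset.sum_le_sum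
      intro i _
      exact Nat.mul_le_mul_right _ (by omega)
    have hct : ct n t ≤ T := ct_le_of_le_mul hn htT
    refine ⟨t, c 0 + s * (T - ct n t), ?_⟩
    rw [hc, hsum, gg_zero]
    unfold w
    rw [add_mul]
    have hkey : s * (T - ct n t) * a + s * ct n t * a = T * (s * a) := by
      rw [← add_mul, ← Nat.mul_add, Nat.sub_add_cancel hct]
      ring
    omega
  · rintro ⟨t, k, rfl⟩
    exact kaw_mem hgen hn k t

end withgen

section B
variable (hgen : S = {m : ℕ | ∃ c : Fin (n + 1) → ℕ, m = ∑ j, c j * gg a s d n j})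
include hgen

lemma w_reduce (ha : 0 < a) (hn : 0 < n) :
    ∀ t, ∃ t' k', t' < a ∧ w a s d n t = k' * a + w a s d n t' := by
  intro t
  induction t using Nat.strong_induction_on with
  | _ t ih =>
    rcases lt_or_ge t a with h | h
    · exact ⟨t, 0, h, by simp⟩
    · obtain ⟨t', k', h1, h2⟩ := ih (t - a) (by omega)
      refine ⟨t', k' + s * (ct n t - ct n (t - a)) + d, h1, ?_⟩
      have hmono := ct_mono (n := n) (show t - a ≤ t by omega)
      have h3 : s * (ct n t - ct n (t-a)) * a + s * ct n (t-a) * a = s * ct n t * a := by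
        rw [← add_mul, ← Nat.mul_add, Nat.sub_add_cancel hmono]
      have h4 : (t - a) * d + d * a = t * d := by
        rw [mul_comm d a, ← add_mul, Nat.sub_add_cancel h]
      have h5 : w a s d n t = (s * (ct n t - ct n (t-a)) + d) * a + w a s d n (t-a) := by
        unfold w
        rw [add_mul]
        omega
      rw [h5, h2]
      ring

lemma mem_reduce (ha : 0 < a) (hn : 0 < n) {x : ℕ} (hx : x ∈ S) :
    ∃ t k, t < a ∧ x = k * a + w a s d n t := by
  obtain ⟨t, k, rfl⟩ := (mem_iff hgen hn).1 hx
  obtain ⟨t', k', h1, h2⟩ := w_reduce hgen ha hn t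
  exact ⟨t', k + k', h1, by rw [h2]; ring⟩

lemma notMem (ha : 0 < a) (hn : 0 < n) (hcop : Nat.Coprime a d)
    {x t0 : ℕ} (ht0 : t0 < a) (hres : x % a = (t0 * d) % a) (hlt : x < w a s d n t0) :
    x ∉ S := by
  intro hx
  obtain ⟨t, k, rfl⟩ := (mem_iff hgen hn).1 hx
  have he : k * a + w a s d n t = t * d + (k + s * ct n t) * a := by
    unfold w; ring
  have hmod : (k * a + w a s d n t) % a = (t * d) % a := by
    rw [he, Nat.add_mul_mod_self_right]
  have hMeq : t * d ≡ t0 * d [MOD a] := by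
    unfold Nat.ModEq
    omega
  have hteq : t ≡ t0 [MOD a] := Nat.ModEq.cancel_right_of_coprime hcop hMeq
  have ht0t : t0 ≤ t := by
    have h1 : t % a = t0 % a := hteq
    have h2 : t0 % a = t0 := Nat.mod_eq_of_lt ht0
    have h3 : t % a ≤ t := Nat.mod_le _ _
    omega
  have := w_mono (a := a) (s := s) (d := d) (n := n) ht0t
  omega

end B


variable {a s d n t t' Q : ℕ} {S : Set ℕ}

lemma ct_aQ_pos (hn : 0 < n) (ha : 2 ≤ a) : 1 ≤ ct n (a - 1) :=
  lt_ct hn (by omega)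

lemma nQ1_lt (hn : 0 < n) (ha : 2 ≤ a) : n * (ct n (a-1) - 1) < a - 1 := by
  have h1 := mul_ct_le (n := n) (t := a - 1)
  have hQ := ct_aQ_pos hn ha
  have h2 : n * (ct n (a-1) - 1) + n = n * ct n (a-1) := by
    rw [← Nat.mul_succ]; congr 1; omega
  omega

lemma ct_eq_Q (hn : 0 < n) (h1 : n * (ct n (a-1) - 1) < t) (h2 : t ≤ a - 1) :
    ct n t = ct n (a-1) := by
  have hu := ct_mono (n := n) h2
  have hl := lt_ct hn h1
  omega

section C
variable (hgen : S = {m : ℕ | ∃ c : Fin (n + 1) → ℕ, m = ∑ j, c j * gg a s d n j})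
include hgen

lemma pf_of_gens (ha : 0 < a) (hs : 0 < s) {f : ℕ} (hf : f ∉ S)
    (h : ∀ j : Fin (n+1), f + gg a s d n j ∈ S) : f ∈ PF S := by
  refine ⟨hf, ?_⟩
  intro x
  induction x using Nat.strong_induction_on with
  | _ x ih =>
    intro hx hx0
    obtain ⟨j, y, hy, rfl⟩ := decomp hgen ha hs hx hx0
    rcases Nat.eq_zero_or_pos y with rfl | hy0
    · simpa using h j
    · have hgp := gg_pos (s := s) (d := d) (n := n) ha hs j
      have h1 : f + y ∈ S := ih y (by omega) hy (by omega)
      have h2 : f + (gg a s d n j + y) = (f + y) + gg a s d n j := by ring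
      rw [h2]
      exact add_mem hgen h1 (gen_mem hgen j)

lemma minGen_form (ha : 0 < a) (hs : 0 < s) {m : ℕ} (hm : IsMinGen S m) :
    ∃ j : Fin (n+1), m = gg a s d n j := by
  obtain ⟨hmS, hm0, hnd⟩ := hm
  obtain ⟨j, y, hy, hxy⟩ := decomp hgen ha hs hmS hm0
  rcases Nat.eq_zero_or_pos y with rfl | hy0
  · exact ⟨j, by omega⟩
  · exact absurd ⟨gg a s d n j, gen_mem hgen j, y, hy,
      (by have := gg_pos (s := s) (d := d) (n := n) ha hs j; omega), by omega, hxy.symm⟩ hnd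

lemma res_lemma {x u : ℕ} (h : x + a = w a s d n u) : x % a = (u * d) % a := by
  have hw : w a s d n u = s * ct n u * a + u * d := rfl
  have h2 : x + a = u * d + (s * ct n u) * a := by omega
  have h3 : (x + a) % a = x % a := Nat.add_mod_right x a
  rw [← h3, h2, Nat.add_mul_mod_self_right]

lemma notMem' (ha : 0 < a) (hn : 0 < n) (hcop : Nat.Coprime a d)
    {x u : ℕ} (h : x + a = w a s d n u) (hu : u < a) : x ∉ S :=
  notMem hgen ha hn hcop hu (res_lemma hgen h) (by omega)

lemma mem_helper (hn : 0 < n) {x K u : ℕ} (hK : 1 ≤ K)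
    (h : x + a = K * a + w a s d n u) : x ∈ S := by
  obtain ⟨k, rfl⟩ : ∃ k, K = k + 1 := ⟨K - 1, by omega⟩
  have e : (k+1) * a = k * a + a := by ring
  have hx : x = k * a + w a s d n u := by omega
  rw [hx]
  exact kaw_mem hgen hn k u

lemma PF_char (ha : 2 ≤ a) (hs : 0 < s) (hd : 0 < d) (hn : 0 < n)
    (hcop : Nat.Coprime a d) :
    PF S = {f | ∃ t, n * (ct n (a-1) - 1) < t ∧ t ≤ a - 1 ∧ f + a = w a s d n t} := by
  have ha0 : 0 < a := by omega
  have hQ1 := ct_aQ_pos (n := n) hn ha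
  set Q := ct n (a-1) with hQdef
  ext f
  constructor
  · rintro ⟨hfS, hfP⟩
    have haS : a ∈ S := by simpa [gg_zero] using gen_mem hgen (0 : Fin (n+1))
    have hfa : f + a ∈ S := hfP a haS (by omega)
    obtain ⟨t, k, ht, hfk⟩ := mem_reduce hgen ha0 hn hfa
    have hk0 : k = 0 := by
      by_contra hk
      obtain ⟨k', rfl⟩ : ∃ k', k = k' + 1 := ⟨k - 1, by omega⟩
      have e : (k'+1) * a = k' * a + a := by ring
      have hf' : f = k' * a + w a s d n t := by omega
      exact hfS (hf' ▸ kaw_mem hgen hn k' t)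
    rw [hk0, zero_mul, zero_add] at hfk
    have ht1 : 1 ≤ t := by
      by_contra h0
      have : t = 0 := by omega
      rw [this, w_zero hn] at hfk
      omega
    refine ⟨t, ?_, by omega, hfk⟩
    by_contra hle
    push_neg at hle
    have hQ2 : 2 ≤ Q := by
      by_contra hQ
      have : Q - 1 = 0 := by omega
      rw [this, Nat.mul_zero] at hle
      omega
    set q := ct n t with hqdef
    have hq_le : q ≤ Q - 1 := by
      calc q ≤ ct n (n * (Q-1)) := ct_mono hle
        _ = Q - 1 := ct_mul hn
    have htq : t ≤ n * q := le_mul_ct hn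
    have hnq_le : n * q ≤ t + n - 1 := mul_ct_le
    set j := n * q - t + 1 with hjdef
    have hj1 : 1 ≤ j := by omega
    have hjn : j ≤ n := by omega
    have htj : t + j = n * q + 1 := by omega
    have hctj : ct n (t + j) = q + 1 := by
      rw [htj]
      have hub : ct n (n * q + 1) ≤ q + 1 := by
        apply ct_le_of_le_mul hn
        have : n * (q + 1) = n * q + n := by ring
        omega
      have hlb : q < ct n (n * q + 1) := lt_ct hn (by omega)
      omega
    have hqQ : n * q ≤ n * (Q - 1) := Nat.mul_le_mul_left n hq_le
    have htja : t + j ≤ a - 1 := by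
      have hnQ : n * (Q - 1) < a - 1 := nQ1_lt hn ha
      omega
    have jf : Fin (n+1) := ⟨j, by omega⟩
    have hjf : gg a s d n (⟨j, by omega⟩ : Fin (n+1)) = s * a + j * d :=
      gg_of_ne (by simpa using (by omega : j ≠ 0))
    have hmem : f + gg a s d n (⟨j, by omega⟩ : Fin (n+1)) ∈ S :=
      hfP _ (gen_mem hgen _) (by have := gg_pos (s := s) (d := d) (n := n) ha0 hs ⟨j, by omega⟩; omega)
    rw [hjf] at hmem
    have hxw : (f + (s * a + j * d)) + a = w a s d n (t + j) := by
      have hwt : w a s d n t = s * q * a + t * d := rfl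
      have hwtj : w a s d n (t+j) = s * (q+1) * a + (t+j) * d := by
        unfold w; rw [hctj]
      have e1 : s * (q+1) * a = s * q * a + s * a := by ring
      have e2 : (t+j) * d = t * d + j * d := by ring
      omega
    exact notMem' hgen ha0 hn hcop hxw (by omega) hmem
  · rintro ⟨t, h1, h2, hfw⟩
    have hQt : ct n t = Q := ct_eq_Q hn h1 h2
    have hfS : f ∉ S := notMem' hgen ha0 hn hcop hfw (by omega)
    apply pf_of_gens hgen ha0 hs hfS
    intro j
    by_cases hj0 : (j : ℕ) = 0
    · have : gg a s d n j = a := by simp [gg, hj0]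
      rw [this, hfw]
      exact w_mem hgen hn t
    · rw [gg_of_ne hj0]
      set j' := (j : ℕ) with hj'
      have hj'1 : 1 ≤ j' := by omega
      have hj'n : j' ≤ n := by
        have := j.isLt
        omega
      have hwt : w a s d n t = s * Q * a + t * d := by
        unfold w; rw [hQt]
      rcases le_or_gt (t + j') (a - 1) with hcase | hcase
      · -- t + j' ≤ a - 1 : land on w (t+j') plus multiple of a
        have hle_nQ : t + j' ≤ n * Q := by
          have hanQ : a - 1 ≤ n * Q := le_mul_ct hn
          omega
        have hctle : ct n (t + j') ≤ Q := ct_le_of_le_mul hn hle_nQ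
        have hsc : s * ct n (t+j') ≤ s * Q := Nat.mul_le_mul_left s hctle
        set K := s * (Q + 1) - s * ct n (t + j') with hKdef
        have hsQ1 : s * Q + s = s * (Q+1) := by ring
        have hK1 : 1 ≤ K := by omega
        apply mem_helper hgen hn hK1 (u := t + j')
        have hwtj : w a s d n (t+j') = s * ct n (t+j') * a + (t+j') * d := rfl
        have hKs : K + s * ct n (t+j') = s * (Q+1) := by omega
        have E8 : (K + s * ct n (t+j')) * a = K * a + s * ct n (t+j') * a := by ring
        have E9 : (s * (Q+1)) * a = s * Q * a + s * a := by ring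
        have E10 : (K + s * ct n (t+j')) * a = (s * (Q+1)) * a := by rw [hKs]
        have E4 : (t + j') * d = t * d + j' * d := by ring
        omega
      · -- t + j' ≥ a : wrap around
        set u := t + j' - a with hudef
        have hun : u ≤ n - 1 := by omega
        have hctu : ct n u ≤ 1 := ct_le_of_le_mul hn (by omega)
        have hsc : s * ct n u ≤ s * 1 := Nat.mul_le_mul_left s hctu
        set K := s * (Q + 1) + d - s * ct n u with hKdef
        have hsQ1 : s * Q + s = s * (Q+1) := by ring
        have hs1 : s * 1 = s := by ring
        have hK1 : 1 ≤ K := by omega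
        apply mem_helper hgen hn hK1 (u := u)
        have hwtu : w a s d n u = s * ct n u * a + u * d := rfl
        have hKs : K + s * ct n u = s * (Q+1) + d := by omega
        have E8 : (K + s * ct n u) * a = K * a + s * ct n u * a := by ring
        have E9 : (s * (Q+1) + d) * a = s * Q * a + s * a + d * a := by ring
        have E10 : (K + s * ct n u) * a = (s * (Q+1) + d) * a := by rw [hKs]
        have E4 : (t + j') * d = t * d + j' * d := by ring
        have E5 : t + j' = u + a := by omega
        have E6 : (t + j') * d = u * d + a * d := by rw [E5]; ring
        have E7 : a * d = d * a := by ring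
        omega

lemma w_ge_a (ha : 2 ≤ a) (hs : 0 < s) (hn : 0 < n) (ht : 1 ≤ t) :
    a ≤ w a s d n t := by
  have h1 : 1 ≤ ct n t := lt_ct hn (by omega)
  have h2 : a ≤ s * ct n t * a :=
    Nat.le_mul_of_pos_left a (Nat.mul_pos hs h1)
  have h3 : w a s d n t = s * ct n t * a + t * d := rfl
  omega

lemma a_mem (hn : 0 < n) : a ∈ S := by
  simpa [gg_zero] using gen_mem hgen (0 : Fin (n+1))

end C

end S15


theorem stmt15 (a s d n : ℕ) (ha : 0 < a) (hs : 0 < s) (hd : 0 < d) (hn : 0 < n)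
    (hcop : Nat.Coprime a d) (S : Set ℕ)
    (hgen : S = {m : ℕ | ∃ c : Fin (n + 1) → ℕ,
      m = ∑ j, c j * (if (j : ℕ) = 0 then a else s * a + (j : ℕ) * d)})
    (hmin : ∀ j : Fin (n + 1),
      IsMinGen S (if (j : ℕ) = 0 then a else s * a + (j : ℕ) * d)) :
    NearlyGGen S ↔ (s = 1 ∨ a ≡ 2 [MOD n]) := by
  classical
  have hgen' : S = {m : ℕ | ∃ c : Fin (n + 1) → ℕ, m = ∑ j, c j * S15.gg a s d n j} := hgen
  have hmin' : ∀ j : Fin (n + 1), IsMinGen S (S15.gg a s d n j) := hmin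
  clear hgen hmin
  have ha2 : 2 ≤ a := by
    by_contra hcon
    have ha1 : a = 1 := by omega
    have hall : ∀ x : ℕ, x ∈ S := by
      intro x
      have h := S15.kaw_mem hgen' hn x 0
      rwa [S15.w_zero hn, ha1, mul_one, add_zero] at h
    obtain ⟨_, hne, hnd⟩ := hmin' ⟨1, by omega⟩
    have hg1 : S15.gg a s d n ⟨1, by omega⟩ = s * a + 1 * d :=
      S15.gg_of_ne (by simp)
    have hg1' : 2 ≤ S15.gg a s d n ⟨1, by omega⟩ := by
      rw [hg1, ha1]; omega
    exact hnd ⟨1, hall 1, S15.gg a s d n ⟨1, by omega⟩ - 1, hall _, one_ne_zero,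
      by omega, by omega⟩
  have ha0 : 0 < a := by omega
  have hPF := S15.PF_char hgen' ha2 hs hd hn hcop
  set Q := S15.ct n (a - 1) with hQdef
  have hQ1 : 1 ≤ Q := S15.ct_aQ_pos hn ha2
  have hnQlt : n * (Q - 1) < a - 1 := S15.nQ1_lt hn ha2
  have hanQ : a - 1 ≤ n * Q := S15.le_mul_ct hn
  have hmulsucc : n * (Q - 1) + n = n * Q := by
    rw [← Nat.mul_succ]; congr 1; omega
  obtain ⟨F, hF⟩ : ∃ F, F + a = S15.w a s d n (a - 1) :=
    ⟨S15.w a s d n (a-1) - a, by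
      have := S15.w_ge_a hgen' ha2 hs hn (t := a - 1) (by omega); omega⟩
  have hFPF : F ∈ PF S := by
    rw [hPF]; exact ⟨a - 1, hnQlt, le_rfl, hF⟩
  have ewa1 : S15.w a s d n (a-1) = s * Q * a + (a-1) * d := rfl
  constructor
  · -- nearly Gorenstein → s = 1 ∨ a ≡ 2 [MOD n]
    intro hNG
    by_contra hcon
    push_neg at hcon
    obtain ⟨hs1, hmod⟩ := hcon
    have hs2 : 2 ≤ s := by omega
    have hr2 : n * (Q - 1) < a - 2 := by
      by_contra hcc
      have he : n * (Q - 1) = a - 2 := by omega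
      apply hmod
      show a % n = 2 % n
      have ha' : a = n * (Q - 1) + 2 := by omega
      rw [ha', Nat.mul_add_mod]
    have hminA : IsMinGen S a := by
      have := hmin' 0
      rwa [S15.gg_zero] at this
    obtain ⟨f, hfPF, hP⟩ := hNG a hminA
    rw [hPF] at hfPF
    obtain ⟨t, ht1, ht2, hfw⟩ := hfPF
    have hQt : S15.ct n t = Q := S15.ct_eq_Q hn ht1 ht2
    have ewt : S15.w a s d n t = s * Q * a + t * d := by
      unfold S15.w; rw [hQt]
    rcases eq_or_lt_of_le ht2 with hte | htl
    · -- t = a - 1, use g = w(a-2) - a, get a + d ∈ S, contradiction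
      obtain ⟨g2, hg2⟩ : ∃ g2, g2 + a = S15.w a s d n (a - 2) :=
        ⟨S15.w a s d n (a-2) - a, by
          have := S15.w_ge_a hgen' ha2 hs hn (t := a - 2) (by omega); omega⟩
      have hg2PF : g2 ∈ PF S := by
        rw [hPF]; exact ⟨a - 2, hr2, by omega, hg2⟩
      have hct2 : S15.ct n (a - 2) = Q := S15.ct_eq_Q hn hr2 (by omega)
      have ewa2 : S15.w a s d n (a-2) = s * Q * a + (a-2) * d := by
        unfold S15.w; rw [hct2]
      have e3 : (a-1) * d = (a-2) * d + d := by
        rw [(by omega : a - 1 = (a-2) + 1)]; ring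
      have hfwa : f + a = s * Q * a + (a-1) * d := by
        rw [hte] at hfw; omega
      have hfg : f = g2 + d := by omega
      obtain ⟨x, hxS, hxeq⟩ := hP g2 hg2PF
      have hx : x = a + d := by omega
      have hnotin : a + d ∉ S := by
        apply S15.notMem hgen' ha0 hn hcop (t0 := 1) (by omega)
        · rw [one_mul, add_comm, Nat.add_mod_right]
        · have ew1 : S15.w a s d n 1 = s * 1 * a + 1 * d := by
            unfold S15.w; rw [S15.ct_eq_one hn le_rfl hn]
          have h2a : 2 * a ≤ s * a := Nat.mul_le_mul_right a hs2
          have es : s * 1 * a = s * a := by ring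
          omega
      exact hnotin (hx ▸ hxS)
    · -- t < a - 1 : use g = F, get a - i*d "in S", contradiction
      obtain ⟨x, hxS, hxeq⟩ := hP F hFPF
      obtain ⟨i, hti⟩ : ∃ i, t + i = a - 1 := ⟨a - 1 - t, by omega⟩
      have e3 : (a-1) * d = t * d + i * d := by
        rw [← hti]; ring
      have hfF : f + i * d = F := by omega
      have hxa : x + i * d = a := by
        have hc1 : (x:ℤ) = (a:ℤ) + (f:ℤ) - (F:ℤ) := hxeq
        have hc2 : (f:ℤ) + ((i*d : ℕ) : ℤ) = (F:ℤ) := by exact_mod_cast hfF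
        omega
      have hi1 : 1 ≤ i := by omega
      have hi2 : i ≤ a - 2 := by omega
      have hid1 : 1 ≤ i * d := Nat.mul_pos (by omega) hd
      rcases Nat.eq_zero_or_pos x with rfl | hx1
      · have hia : i * d = a := by omega
        have hdvd : d ∣ a := ⟨i, by rw [← hia]; ring⟩
        have hd1 : d = 1 := Nat.Coprime.eq_one_of_dvd hcop.symm hdvd
        rw [hd1, mul_one] at hia
        omega
      · have hxnot : x ∉ S := by
          apply S15.notMem hgen' ha0 hn hcop (t0 := a - i) (by omega)
          · have e4 : (a-i) * d + i * d = a * d := by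
              rw [← add_mul, (by omega : a - i + i = a)]
            have e5 : a * (d-1) + a = a * d := by
              rw [← Nat.mul_succ]; congr 1; omega
            have e6 : (a-i) * d = a * (d-1) + x := by omega
            rw [e6, Nat.mul_add_mod]
          · have h1 : 1 ≤ S15.ct n (a-i) := S15.lt_ct hn (by omega)
            have h2 : a ≤ s * S15.ct n (a-i) * a :=
              Nat.le_mul_of_pos_left a (Nat.mul_pos hs h1)
            have h3 : S15.w a s d n (a-i) = s * S15.ct n (a-i) * a + (a-i) * d := rfl
            omega
        exact hxnot hxS
  · -- s = 1 ∨ a ≡ 2 [MOD n] → nearly Gorenstein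
    rintro (rfl | hmod)
    · -- s = 1
      intro m hm
      obtain ⟨j, rfl⟩ := S15.minGen_form hgen' ha0 hs hm
      obtain ⟨k, hkdef⟩ : ∃ k, k = (j : ℕ) := ⟨(j : ℕ), rfl⟩
      have hkn : k ≤ n := by have := j.isLt; omega
      have hgj : S15.gg a 1 d n j = a + k * d := by
        unfold S15.gg
        rw [← hkdef]
        split
        · rename_i hh
          rw [show k = 0 from hkdef.symm ▸ hh]; ring
        · ring
      obtain ⟨r', hr'⟩ : ∃ r', n * (Q - 1) + r' = a - 1 := ⟨a - 1 - n*(Q-1), by omega⟩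
      have hr'1 : 1 ≤ r' := by omega
      have hr'n : r' ≤ n := by omega
      obtain ⟨i, hik, hir, hiu⟩ : ∃ i, i ≤ k ∧ i ≤ r' - 1 ∧ k + (r' - 1) ≤ n + i := by
        refine ⟨min k (r' - 1), min_le_left _ _, min_le_right _ _, ?_⟩
        rcases le_total k (r' - 1) with h | h
        · rw [min_eq_left h]; omega
        · rw [min_eq_right h]; omega
      obtain ⟨ti, hti⟩ : ∃ ti, ti + i = a - 1 := ⟨a - 1 - i, by omega⟩
      have hti1 : n * (Q - 1) < ti := by omega
      have hti2 : ti ≤ a - 1 := by omega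
      have hctti : S15.ct n ti = Q := S15.ct_eq_Q hn hti1 hti2
      obtain ⟨f, hf⟩ : ∃ f, f + a = S15.w a 1 d n ti :=
        ⟨S15.w a 1 d n ti - a, by
          have := S15.w_ge_a hgen' ha2 hs hn (t := ti) (by omega); omega⟩
      refine ⟨f, by rw [hPF]; exact ⟨ti, hti1, hti2, hf⟩, ?_⟩
      intro g hg
      rw [hPF] at hg
      obtain ⟨t', h1', h2', hg'⟩ := hg
      have hctt' : S15.ct n t' = Q := S15.ct_eq_Q hn h1' h2'
      obtain ⟨j', hj'⟩ : ∃ j', t' + j' = a - 1 := ⟨a - 1 - t', by omega⟩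
      have hj'r : j' ≤ r' - 1 := by omega
      obtain ⟨u, hu⟩ : ∃ u, u + i = k + j' := ⟨k - i + j', by omega⟩
      have hun : u ≤ n := by omega
      have hnat : k + ti = t' + u := by omega
      have e1 : S15.w a 1 d n ti = 1 * Q * a + ti * d := by
        unfold S15.w; rw [hctti]
      have e2 : S15.w a 1 d n t' = 1 * Q * a + t' * d := by
        unfold S15.w; rw [hctt']
      have E : k * d + ti * d = t' * d + u * d := by
        rw [← add_mul, ← add_mul, hnat]
      have hkey : (a + k * d) + f = (a + u * d) + g := by omega
      have humem : a + u * d ∈ S := by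
        rcases Nat.eq_zero_or_pos u with hu0 | hu1
        · rw [hu0]
          simpa using S15.a_mem hgen' hn
        · have hwu : S15.w a 1 d n u = a + u * d := by
            unfold S15.w; rw [S15.ct_eq_one hn hu1 hun]; ring
          rw [← hwu]; exact S15.w_mem hgen' hn u
      refine ⟨a + u * d, humem, ?_⟩
      rw [hgj]
      have hcast := congrArg (Nat.cast : ℕ → ℤ) hkey
      push_cast at hcast ⊢
      omega
    · -- a ≡ 2 [MOD n]
      have hdvd : n ∣ a - 2 := (Nat.modEq_iff_dvd' ha2).1 hmod.symm
      obtain ⟨kk, hkk⟩ := hdvd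
      have hQkk : Q = kk + 1 := by
        have hub : S15.ct n (n * kk + 1) ≤ kk + 1 := by
          apply S15.ct_le_of_le_mul hn
          have : n * (kk + 1) = n * kk + n := by ring
          omega
        have hlb : kk < S15.ct n (n * kk + 1) := S15.lt_ct hn (by omega)
        have ha1 : a - 1 = n * kk + 1 := by omega
        rw [hQdef, ha1]
        omega
      have hnQ1 : n * (Q - 1) = a - 2 := by
        rw [hQkk]
        simpa using hkk.symm
      intro m hm
      refine ⟨F, hFPF, ?_⟩
      intro g hg
      rw [hPF] at hg
      obtain ⟨t', h1', h2', hg'⟩ := hg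
      have ht' : t' = a - 1 := by omega
      have hgF : g = F := by
        rw [ht'] at hg'; omega
      refine ⟨m, hm.1, ?_⟩
      rw [hgF]; ring
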